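/- Let d ≥ 2, let A ∈ ℝ^{d×d} be symmetric positive definite and let C ∈ ℝ^{d×d} be symmetric positive semi-definite. Then det(A + C) ≥ (1 + tr(A^{-1}C))·det A + det C. -/

import Mathlib

open Matrix

theorem scalar_ineq {d : ℕ} (hd : 2 ≤ d) (f : Fin d → ℝ) (hf : ∀ i, 0 ≤ f i) :
    1 + ∑ i, f i + ∏ i, f i ≤ ∏ i, (1 + f i) := by
  have h1 : ∀ i, (1:ℝ) + f i = f i + 1 := fun i => add_comm _ _
  simp_rw [h1, Finset.prod_add, Finset.prod_const_one, mul_one]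
  have hne : (Finset.univ : Finset (Fin d)).Nonempty := by
    apply Finset.univ_nonempty_iff.mpr
    exact Fin.pos_iff_nonempty.mp (by omega)
  set T : Finset (Finset (Fin d)) :=
    insert ∅ (insert Finset.univ ((Finset.univ : Finset (Fin d)).image fun i => {i})) with hT
  have hsub : T ⊆ (Finset.univ : Finset (Fin d)).powerset := by
    intro t _; exact Finset.mem_powerset.mpr (Finset.subset_univ t)
  have huniv_not : (Finset.univ : Finset (Fin d)) ∉
      ((Finset.univ : Finset (Fin d)).image fun i => {i}) := by
    simp only [Finset.mem_image, not_exists]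
    rintro i ⟨_, h⟩
    have := congrArg Finset.card h
    simp [Finset.card_univ] at this
    omega
  have hempty_not : (∅ : Finset (Fin d)) ∉
      insert Finset.univ ((Finset.univ : Finset (Fin d)).image fun i => {i}) := by
    simp only [Finset.mem_insert, Finset.mem_image]
    rintro (h | ⟨i, _, h⟩)
    · exact hne.ne_empty h.symm
    · exact Finset.singleton_ne_empty i h
  have hsumT : ∑ t ∈ T, ∏ i ∈ t, f i = 1 + ∑ i, f i + ∏ i, f i := by
    rw [hT, Finset.sum_insert hempty_not, Finset.sum_insert huniv_not,
      Finset.sum_image (fun i _ j _ h => Finset.singleton_injective h)]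
    simp [add_comm, add_left_comm, add_assoc]
  calc 1 + ∑ i, f i + ∏ i, f i = ∑ t ∈ T, ∏ i ∈ t, f i := hsumT.symm
    _ ≤ ∑ t ∈ (Finset.univ : Finset (Fin d)).powerset, ∏ i ∈ t, f i := by
        apply Finset.sum_le_sum_of_subset_of_nonneg hsub
        intro t _ _
        exact Finset.prod_nonneg fun i _ => hf i

theorem aux_unitary {d : ℕ} (hd : 2 ≤ d) (U : Matrix (Fin d) (Fin d) ℝ) (lam : Fin d → ℝ)
    (hlam : ∀ i, 0 ≤ lam i) (hUU : U * star U = 1) (hUU' : star U * U = 1) :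
    1 + (U * diagonal lam * star U).trace + (U * diagonal lam * star U).det
      ≤ (1 + U * diagonal lam * star U).det := by
  have hdetU : U.det * (star U).det = 1 := by rw [← det_mul, hUU, det_one]
  have hone : (1 : Matrix (Fin d) (Fin d) ℝ) + U * diagonal lam * star U
      = U * (1 + diagonal lam) * star U := by
    rw [Matrix.mul_add, Matrix.add_mul, Matrix.mul_one, hUU]
  have htr : (U * diagonal lam * star U).trace = ∑ i, lam i := by
    rw [Matrix.trace_mul_cycle, hUU', Matrix.one_mul,
      Matrix.trace_diagonal]
  have hdet : (U * diagonal lam * star U).det = ∏ i, lam i := by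
    rw [det_mul, det_mul, mul_comm, ← mul_assoc, mul_comm (star U).det, hdetU, one_mul,
      det_diagonal]
  have hdet1 : (1 + U * diagonal lam * star U).det = ∏ i, (1 + lam i) := by
    rw [hone, det_mul, det_mul, mul_comm, ← mul_assoc, mul_comm (star U).det, hdetU, one_mul,
      ← Matrix.diagonal_one, Matrix.diagonal_add, det_diagonal]
  rw [htr, hdet, hdet1]
  exact scalar_ineq hd lam hlam

theorem det_one_add_psd {d : ℕ} (hd : 2 ≤ d) (M : Matrix (Fin d) (Fin d) ℝ)
    (hM : M.PosSemidef) : 1 + M.trace + M.det ≤ (1 + M).det := by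
  have hH := hM.1
  have hspec : M = (hH.eigenvectorUnitary : Matrix (Fin d) (Fin d) ℝ)
      * diagonal hH.eigenvalues * star (hH.eigenvectorUnitary : Matrix (Fin d) (Fin d) ℝ) := by
    have := hH.spectral_theorem
    simpa using this
  rw [hspec]
  exact aux_unitary hd _ _ hM.eigenvalues_nonneg
    ((Matrix.mem_unitaryGroup_iff).mp hH.eigenvectorUnitary.2)
    ((Matrix.mem_unitaryGroup_iff').mp hH.eigenvectorUnitary.2)

/-- Lemma A.1(a) of the paper.  For `d ≥ 2`, a positive definite `A`
and a positive semi-definite `C`: `det(A + C) ≥ (1 + tr(A⁻¹C))·det A + det C`. -/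
theorem det_add_ge_trace_bound {d : ℕ} (hd : 2 ≤ d) (A C : Matrix (Fin d) (Fin d) ℝ)
    (hA : A.PosDef) (hC : C.PosSemidef) :
    (1 + (A⁻¹ * C).trace) * A.det + C.det ≤ (A + C).det := by
  set S := (open scoped MatrixOrder in CFC.sqrt A) with hSdef
  have hS : S.PosSemidef := by
    open scoped MatrixOrder in exact (CFC.sqrt_nonneg A).posSemidef
  have hSS : S * S = A := by
    open scoped MatrixOrder in exact CFC.sqrt_mul_sqrt_self A hA.posSemidef.nonneg
  have hAdet : 0 < A.det := hA.det_pos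
  have hSdet : S.det ≠ 0 := by
    intro h
    rw [← hSS, det_mul, h, mul_zero] at hAdet
    exact lt_irrefl _ hAdet
  have hSu : IsUnit S.det := isUnit_iff_ne_zero.mpr hSdet
  have hS1 : S * S⁻¹ = 1 := mul_nonsing_inv S hSu
  have hS2 : S⁻¹ * S = 1 := nonsing_inv_mul S hSu
  have hSinvH : S⁻¹.IsHermitian := hS.1.inv
  set M := S⁻¹ * C * S⁻¹ with hMdef
  have hMpsd : M.PosSemidef := by
    have := hC.conjTranspose_mul_mul_same S⁻¹
    rwa [hSinvH.eq] at this
  have hCM : C = S * M * S := by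
    rw [hMdef]
    calc C = (S * S⁻¹) * C * (S⁻¹ * S) := by rw [hS1, hS2, Matrix.one_mul, Matrix.mul_one]
    _ = S * (S⁻¹ * C * S⁻¹) * S := by noncomm_ring
  have hAC : A + C = S * (1 + M) * S := by
    rw [Matrix.mul_add, Matrix.add_mul, Matrix.mul_one, hSS, ← hCM]
  have hAinv : A⁻¹ = S⁻¹ * S⁻¹ := by rw [← hSS, Matrix.mul_inv_rev]
  have htr : (A⁻¹ * C).trace = M.trace := by
    rw [hAinv, hMdef, Matrix.mul_assoc, Matrix.trace_mul_comm]
  clear_value M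
  have hdetC : C.det = A.det * M.det := by
    rw [hCM, det_mul, det_mul, ← hSS, det_mul]
    ring
  have hdetAC : (A + C).det = A.det * (1 + M).det := by
    rw [hAC, det_mul, det_mul, ← hSS, det_mul]
    ring
  rw [htr, hdetC, hdetAC]
  have key := det_one_add_psd hd M hMpsd
  nlinarith [hAdet, key]
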